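/- Recurrence formula for the eigenvalues: for all integers n ≥ 0 and ℓ ≥ 0, λ(n,ℓ+1) = ((2ℓ+1)/(ℓ+1)) · (ν/(1+ν)) · λ(n,ℓ) + ((2ℓ+1)/((ℓ+1)(1+ν))) · λ(n+1,ℓ) − (ℓ/(ℓ+1)) · λ(n+1,ℓ−1), where ν = 1−2κ and the last term is interpreted as 0 when ℓ = 0. -/

import Mathlib

open MeasureTheory Real

noncomputable section

/-- The `ℓ`-th Legendre polynomial, via Rodrigues' formula
`P_ℓ(x) = (1/(2^ℓ ℓ!)) (d/dx)^ℓ (x²-1)^ℓ`. -/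
noncomputable def legendreP (l : ℕ) : Polynomial ℝ :=
  ((2 ^ l * l.factorial : ℝ)⁻¹) • (Polynomial.derivative^[l] ((Polynomial.X ^ 2 - 1) ^ l))

/-- The eigenvalues `λ(n,ℓ)` of the linear Maxwell-molecules collision operator:
`λ(n,ℓ) = 1 - (1/(2κ(1-κ))) ∫_{1-2κ}^1 s^(2n+ℓ+1) P_ℓ((1-2κ+s²)/((2-2κ)s)) ds`. -/
noncomputable def lamEV (κ : ℝ) (n l : ℕ) : ℝ :=
  1 - (1 / (2 * κ * (1 - κ))) *
    ∫ s in (1 - 2 * κ)..1,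
      s ^ (2 * n + l + 1) * (legendreP l).eval ((1 - 2 * κ + s ^ 2) / ((2 - 2 * κ) * s))

open Polynomial

private def u (l : ℕ) : ℝ[X] := ((X : ℝ[X]) ^ 2 - 1) ^ l

private lemma hd2 : derivative ((X : ℝ[X]) ^ 2 - 1) = C 2 * X := by
  simp only [derivative_sub, derivative_one, derivative_X_pow, Nat.cast_ofNat, sub_zero,
    pow_one]
  norm_num

private lemma du (l : ℕ) :
    derivative (u (l + 1)) = C ((2:ℝ) * (l + 1)) * (X * u l) := by
  unfold u
  rw [derivative_pow, hd2]
  rw [Nat.add_sub_cancel]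
  simp only [map_mul, map_add, map_one, Nat.cast_add, Nat.cast_one]
  ring

private lemma L1 (m : ℕ) (f : ℝ[X]) :
    derivative^[m + 1] (X * f) =
      X * derivative^[m + 1] f + C ((m : ℝ) + 1) * derivative^[m] f := by
  induction m with
  | zero => simp [derivative_mul]; ring
  | succ m ih =>
    rw [Function.iterate_succ_apply' derivative (m + 1) (X * f), ih]
    have e1 : derivative^[m + 1] f = derivative (derivative^[m] f) :=
      Function.iterate_succ_apply' _ _ _
    have e2 : derivative^[m + 1 + 1] f = derivative (derivative (derivative^[m] f)) := by
      rw [Function.iterate_succ_apply' derivative (m + 1) f, e1]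
    rw [e1, e2]
    set g := derivative^[m] f
    simp only [derivative_add, derivative_mul, derivative_X, derivative_C, one_mul, zero_mul]
    push_cast
    simp only [map_add, map_mul, map_one]
    ring

private lemma L2 (m : ℕ) (f : ℝ[X]) :
    derivative^[m + 2] (((X : ℝ[X]) ^ 2 - 1) * f) =
      ((X : ℝ[X]) ^ 2 - 1) * derivative^[m + 2] f
        + C (2 * ((m : ℝ) + 2)) * (X * derivative^[m + 1] f)
        + C (((m : ℝ) + 1) * ((m : ℝ) + 2)) * derivative^[m] f := by
  induction m with
  | zero =>
    show derivative (derivative _) = _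
    rw [derivative_mul, hd2]
    simp only [Nat.cast_zero]
    simp only [derivative_add, derivative_mul, derivative_X, derivative_C, hd2,
      Function.iterate_succ, Function.iterate_zero, Function.comp_apply, id_eq]
    simp only [Nat.cast_zero, map_mul, map_add, map_one, map_ofNat, map_zero, zero_add]
    ring
  | succ m ih =>
    rw [Function.iterate_succ_apply' derivative (m + 2) _, ih]
    have e1 : derivative^[m + 1] f = derivative (derivative^[m] f) :=
      Function.iterate_succ_apply' _ _ _
    have e2 : derivative^[m + 2] f = derivative (derivative (derivative^[m] f)) := by
      rw [Function.iterate_succ_apply' derivative (m + 1) f, e1]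
    have e3 : derivative^[m + 1 + 2] f = derivative (derivative (derivative (derivative^[m] f))) := by
      rw [show m + 1 + 2 = (m + 2) + 1 from rfl, Function.iterate_succ_apply' derivative (m + 2) f, e2]
    rw [e1, e2, e3]
    set g := derivative^[m] f
    simp only [derivative_add, derivative_mul, derivative_X, derivative_C, hd2, one_mul, zero_mul]
    push_cast
    simp only [map_mul, map_add, map_one, map_ofNat]
    ring

private def cc (l : ℕ) : ℝ := ((2:ℝ) ^ l * l.factorial)⁻¹

private lemma legendreP_eq (l : ℕ) : legendreP l = C (cc l) * derivative^[l] (u l) := by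
  rw [legendreP, smul_eq_C_mul]; rfl

private lemma hCc (l : ℕ) : (C (cc (l+1)) : ℝ[X]) * C ((2:ℝ) * (l + 1)) = C (cc l) := by
  rw [← map_mul]
  congr 1
  unfold cc
  rw [Nat.factorial_succ]
  push_cast
  have h1 : ((2:ℝ)^l) ≠ 0 := by positivity
  have h2 : ((l.factorial : ℝ)) ≠ 0 := Nat.cast_ne_zero.mpr l.factorial_ne_zero
  field_simp
  ring

-- expansion E1
private lemma E1 (l : ℕ) :
    derivative^[l + 2] (u (l + 2)) =
      C ((2:ℝ) * (l + 2)) * (X * derivative^[l + 1] (u (l + 1))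
        + C ((l:ℝ) + 1) * derivative^[l] (u (l + 1))) := by
  rw [show l + 2 = (l + 1) + 1 from rfl, Function.iterate_succ_apply derivative (l + 1) (u (l + 1 + 1)),
    du (l + 1), iterate_derivative_C_mul, L1 l (u (l + 1))]
  push_cast
  ring

private lemma K (l : ℕ) :
    ((X : ℝ[X]) ^ 2 - 1) * derivative^[l + 2] (u (l + 1)) =
      C (((l:ℝ) + 1) * ((l:ℝ) + 2)) * derivative^[l] (u (l + 1)) := by
  have h1 := L2 l (u (l + 1))
  have h2 := E1 l
  have h3 : ((X : ℝ[X]) ^ 2 - 1) * u (l + 1) = u (l + 2) := by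
    rw [u, u, ← pow_succ']
  rw [h3] at h1
  rw [h1] at h2
  simp only [map_mul, map_add, map_one, map_ofNat] at h2 ⊢
  linear_combination h2

private lemma legendreP_zero' : legendreP 0 = 1 := by
  simp [legendreP]

private lemma legendreP_one' : legendreP 1 = X := by
  rw [legendreP]
  simp only [pow_one, Nat.factorial_one, Nat.cast_one, mul_one, Function.iterate_one]
  rw [hd2, smul_eq_C_mul]
  rw [← mul_assoc, ← map_mul]
  norm_num

private lemma lemA (l : ℕ) :
    derivative (legendreP (l + 1)) =
      X * derivative (legendreP l) + C ((l:ℝ) + 1) * legendreP l := by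
  rw [legendreP_eq (l+1), legendreP_eq l, derivative_C_mul, derivative_C_mul,
    ← Function.iterate_succ_apply' derivative (l + 1) (u (l + 1)),
    Function.iterate_succ_apply derivative (l + 1) (u (l + 1)),
    du l, iterate_derivative_C_mul, L1 l (u l),
    ← Function.iterate_succ_apply' derivative l (u l)]
  linear_combination (X * derivative^[l + 1] (u l) + C ((l:ℝ) + 1) * derivative^[l] (u l)) * hCc l

private lemma lemCc (l : ℕ) :
    ((X : ℝ[X]) ^ 2 - 1) * derivative (legendreP (l + 1)) =
      C ((l:ℝ) + 2) * (legendreP (l + 2) - X * legendreP (l + 1)) := by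
  rw [legendreP_eq (l+1), legendreP_eq (l+2), derivative_C_mul,
    ← Function.iterate_succ_apply' derivative (l + 1) (u (l + 1)), E1 l]
  have hK := K l
  have hC := hCc (l + 1)
  simp only [show l + 1 + 1 = l + 2 by omega] at hC
  simp only [map_mul, map_add, map_one, map_ofNat, Nat.cast_add, Nat.cast_one] at hK hC ⊢
  linear_combination C (cc (l+1)) * hK - (C ((l:ℝ)) + 2) *
    (X * derivative^[l + 1] (u (l + 1)) + (C ((l:ℝ)) + 1) * derivative^[l] (u (l + 1))) * hC

private lemma lemCcAll (l : ℕ) :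
    ((X : ℝ[X]) ^ 2 - 1) * derivative (legendreP l) =
      C ((l:ℝ) + 1) * (legendreP (l + 1) - X * legendreP l) := by
  cases l with
  | zero => simp [legendreP_zero', legendreP_one']
  | succ m =>
    have h := lemCc m
    simp only [map_mul, map_add, map_one, map_ofNat, Nat.cast_add, Nat.cast_one] at h ⊢
    linear_combination h

private lemma bonnet (l : ℕ) :
    C ((l:ℝ) + 2) * legendreP (l + 2) =
      C (2 * (l:ℝ) + 3) * (X * legendreP (l + 1)) - C ((l:ℝ) + 1) * legendreP l := by
  have hA := lemA l
  have h1 := lemCcAll (l + 1)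
  have h2 := lemCcAll l
  simp only [map_mul, map_add, map_one, map_ofNat, Nat.cast_add, Nat.cast_one] at hA h1 h2 ⊢
  linear_combination ((X:ℝ[X])^2 - 1) * hA - h1 + X * h2

private lemma legendre_rec (l : ℕ) (x : ℝ) :
    ((l:ℝ) + 1) * (legendreP (l + 1)).eval x =
      (2 * (l:ℝ) + 1) * (x * (legendreP l).eval x) - (l:ℝ) * (legendreP (l - 1)).eval x := by
  cases l with
  | zero => simp [legendreP_zero', legendreP_one']
  | succ m =>
    have h := congrArg (Polynomial.eval x) (bonnet m)
    simp only [eval_mul, eval_sub, eval_C, eval_X] at h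
    push_cast [Nat.add_sub_cancel]
    linear_combination h

private lemma natDegree_legendreP_le (l : ℕ) : (legendreP l).natDegree ≤ l := by
  rw [legendreP_eq]
  refine (natDegree_C_mul_le _ _).trans ?_
  refine (natDegree_iterate_derivative _ _).trans ?_
  have h2 : ((X : ℝ[X]) ^ 2 - 1).natDegree ≤ 2 := by
    refine (natDegree_sub_le _ _).trans ?_
    norm_num [natDegree_X_pow]
  have h1 : (u l).natDegree ≤ 2 * l := by
    refine (natDegree_pow_le).trans ?_
    have := Nat.mul_le_mul_left l h2
    omega
  omega

private lemma ptwise (ν c : ℝ) (hc : c ≠ 0) (m l : ℕ) (s : ℝ) :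
    ((l:ℝ) + 1) * (s ^ (2*m + (l+1) + 1) * (legendreP (l+1)).eval ((ν + s^2)/(c*s))) =
      (2*(l:ℝ)+1) * ν / c * (s ^ (2*m + l + 1) * (legendreP l).eval ((ν + s^2)/(c*s)))
      + (2*(l:ℝ)+1) / c * (s ^ (2*(m+1) + l + 1) * (legendreP l).eval ((ν + s^2)/(c*s)))
      - (l:ℝ) * (s ^ (2*(m+1) + (l-1) + 1) * (legendreP (l-1)).eval ((ν + s^2)/(c*s))) := by
  by_cases hs : s = 0
  · rw [hs]
    rw [zero_pow (by omega), zero_pow (by omega), zero_pow (by omega), zero_pow (by omega)]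
    ring
  · have h := legendre_rec l ((ν + s^2)/(c*s))
    have hx : (ν + s^2)/(c*s) * s = (ν + s^2)/c := by
      field_simp
    cases l with
    | zero =>
      norm_num [legendreP_zero', legendreP_one'] at h ⊢
      linear_combination s ^ (2*m+1) * hx
    | succ k =>
      simp only [Nat.add_sub_cancel] at h ⊢
      push_cast at h ⊢
      linear_combination s ^ (2*m+k+3) * h
        + (2*(k:ℝ)+3) * s ^ (2*m+k+2) * ((legendreP (k+1)).eval ((ν + s^2)/(c*s))) * hx

private def QQ (ν c : ℝ) (j : ℕ) : ℝ[X] :=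
  ∑ k ∈ Finset.range (j+1),
    C ((legendreP j).coeff k * (c⁻¹)^k) * (C ν + X^2)^k * X^(j-k)

private lemma evalQQ (ν c : ℝ) (hc : c ≠ 0) (j : ℕ) (s : ℝ) (hs : s ≠ 0) :
    (QQ ν c j).eval s = s^j * (legendreP j).eval ((ν + s^2)/(c*s)) := by
  rw [Polynomial.eval_eq_sum_range' (Nat.lt_succ_of_le (natDegree_legendreP_le j)),
    QQ, Polynomial.eval_finset_sum, Finset.mul_sum]
  refine Finset.sum_congr rfl fun k hk => ?_
  have hk' : k ≤ j := Nat.lt_succ_iff.mp (Finset.mem_range.mp hk)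
  simp only [eval_mul, eval_pow, eval_C, eval_add, eval_X]
  have hpow : s ^ (j - k) * s ^ k = s ^ j := by
    rw [← pow_add]; congr 1; omega
  rw [div_pow, mul_pow]
  rw [← hpow, inv_pow]
  field_simp

private lemma integrable_f (ν c : ℝ) (hc : c ≠ 0) (a b : ℝ) (m j : ℕ) :
    IntervalIntegrable
      (fun s => s ^ (2*m + j + 1) * (legendreP j).eval ((ν + s^2)/(c*s)))
      MeasureTheory.volume a b := by
  have hcont : IntervalIntegrable (fun s => (X^(2*m+1) * QQ ν c j).eval s)
      MeasureTheory.volume a b :=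
    (Polynomial.continuous _).intervalIntegrable a b
  refine hcont.congr_ae ?_
  have hnull : ∀ᵐ s ∂(MeasureTheory.volume : MeasureTheory.Measure ℝ), s ≠ 0 := by
    have : (MeasureTheory.volume : MeasureTheory.Measure ℝ) {(0:ℝ)} = 0 :=
      Real.volume_singleton
    exact MeasureTheory.measure_mono_null (fun s hs => by simpa using hs) this
  refine MeasureTheory.ae_restrict_of_ae ?_
  filter_upwards [hnull] with s hs
  rw [eval_mul, eval_pow, eval_X, evalQQ ν c hc j s hs, ← mul_assoc, ← pow_add]
  congr 2
  omega


/-- Recurrence formula for the eigenvalues: for all `n, ℓ ≥ 0`,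
`λ(n,ℓ+1) = ((2ℓ+1)/(ℓ+1))(ν/(1+ν)) λ(n,ℓ) + ((2ℓ+1)/((ℓ+1)(1+ν))) λ(n+1,ℓ)
  - (ℓ/(ℓ+1)) λ(n+1,ℓ-1)`, the last term being `0` when `ℓ = 0`. -/
theorem lamEV_recurrence (κ : ℝ) (hκ : κ ∈ Set.Ioo (0 : ℝ) 1) (ν : ℝ) (hν : ν = 1 - 2 * κ)
    (n l : ℕ) :
    lamEV κ n (l + 1) =
      ((2 * l + 1 : ℝ) / (l + 1)) * (ν / (1 + ν)) * lamEV κ n l +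
        ((2 * l + 1 : ℝ) / ((l + 1) * (1 + ν))) * lamEV κ (n + 1) l -
          ((l : ℝ) / (l + 1)) * lamEV κ (n + 1) (l - 1) := by
  subst hν
  obtain ⟨hκ0, hκ1⟩ := hκ
  have hc : (2 - 2*κ) ≠ 0 := by linarith
  have hd : 2 * κ * (1 - κ) ≠ 0 := ne_of_gt (by nlinarith)
  have hl1 : ((l:ℝ) + 1) ≠ 0 := by positivity
  set F : ℕ → ℕ → ℝ → ℝ := fun m j s =>
    s ^ (2 * m + j + 1) * (legendreP j).eval ((1 - 2 * κ + s ^ 2) / ((2 - 2 * κ) * s)) with hF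
  have hInt : ∀ m j, IntervalIntegrable (F m j) MeasureTheory.volume (1 - 2 * κ) 1 :=
    fun m j => integrable_f (1 - 2*κ) (2 - 2*κ) hc _ _ m j
  have key : ∫ s in (1 - 2*κ)..1, ((l:ℝ) + 1) * F n (l+1) s
      = ∫ s in (1 - 2*κ)..1,
          ((2*(l:ℝ)+1) * (1 - 2*κ) / (2 - 2*κ) * F n l s
            + (2*(l:ℝ)+1) / (2 - 2*κ) * F (n+1) l s
            - (l:ℝ) * F (n+1) (l-1) s) :=
    intervalIntegral.integral_congr (fun s _ => ptwise (1 - 2*κ) (2 - 2*κ) hc n l s)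
  rw [intervalIntegral.integral_const_mul, intervalIntegral.integral_sub
      (((hInt n l).const_mul _).add ((hInt (n+1) l).const_mul _)) ((hInt (n+1) (l-1)).const_mul _),
    intervalIntegral.integral_add ((hInt n l).const_mul _) ((hInt (n+1) l).const_mul _),
    intervalIntegral.integral_const_mul, intervalIntegral.integral_const_mul,
    intervalIntegral.integral_const_mul] at key
  simp only [lamEV]
  set I1 := ∫ s in (1 - 2*κ)..1, F n (l+1) s with hI1
  set I2 := ∫ s in (1 - 2*κ)..1, F n l s with hI2
  set I3 := ∫ s in (1 - 2*κ)..1, F (n+1) l s with hI3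
  set I4 := ∫ s in (1 - 2*κ)..1, F (n+1) (l-1) s with hI4
  have h1ν : 1 + (1 - 2*κ) ≠ 0 := by linarith
  have key' : ((l:ℝ)+1) * I1 * (2 - 2*κ) =
      (2*(l:ℝ)+1) * (1-2*κ) * I2 + (2*(l:ℝ)+1) * I3 - (l:ℝ) * I4 * (2 - 2*κ) := by
    field_simp at key
    linear_combination key
  have hI1e : I1 = ((2*(l:ℝ)+1)*(1-2*κ)*I2 + (2*(l:ℝ)+1)*I3 - (l:ℝ)*I4*(2-2*κ))
      / (((l:ℝ)+1)*(2-2*κ)) := by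
    rw [eq_div_iff (mul_ne_zero hl1 hc)]
    linear_combination key'
  rw [hI1e]
  field_simp
  ring
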